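/- Let B ⊆ ℝ^(n+1) be compact, strictly convex, with non-empty interior, let v be a unit vector, and let p_v be orthogonal projection onto v^⊥. Then for every point y in the topological boundary of p_v(B) there is exactly one point x ∈ B with p_v(x) = y, and moreover this x lies in the boundary S = ∂B. -/

import Mathlib

open Metric Set
open scoped RealInnerProductSpace

/-- Orthogonal projection of `ℝ^{n+1}` onto the hyperplane orthogonal to `v`. -/
noncomputable def pv {n : ℕ} (v : EuclideanSpace ℝ (Fin (n + 1))) :
    EuclideanSpace ℝ (Fin (n + 1)) →L[ℝ] ↥((ℝ ∙ v)ᗮ) :=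
  (ℝ ∙ v)ᗮ.orthogonalProjectionOnto

/-- `B` is strictly convex: every open segment between two distinct points of `B`
lies in the interior of `B`. -/
def StrictlyConvexSet {V : Type*} [AddCommGroup V] [Module ℝ V] [TopologicalSpace V]
    (B : Set V) : Prop :=
  ∀ x ∈ B, ∀ y ∈ B, x ≠ y → openSegment ℝ x y ⊆ interior B

/-- Points of `B` projecting to the boundary of `p_v(B)`. -/
def D0 {n : ℕ} (B : Set (EuclideanSpace ℝ (Fin (n + 1)))) (v : EuclideanSpace ℝ (Fin (n + 1))) :
    Set (EuclideanSpace ℝ (Fin (n + 1))) :=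
  {x ∈ B | pv v x ∈ frontier (pv v '' B)}

/-- Upper region of `S = ∂B`: points over the interior of `p_v(B)` maximizing `x·v` on the fiber. -/
def Uplus {n : ℕ} (B : Set (EuclideanSpace ℝ (Fin (n + 1)))) (v : EuclideanSpace ℝ (Fin (n + 1))) :
    Set (EuclideanSpace ℝ (Fin (n + 1))) :=
  {x | x ∈ frontier B ∧ pv v x ∈ interior (pv v '' B) ∧
    ∀ y ∈ B, pv v y = pv v x → ⟪y, v⟫ ≤ ⟪x, v⟫}

/-- Lower region of `S = ∂B`: points over the interior of `p_v(B)` minimizing `x·v` on the fiber. -/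
def Uminus {n : ℕ} (B : Set (EuclideanSpace ℝ (Fin (n + 1)))) (v : EuclideanSpace ℝ (Fin (n + 1))) :
    Set (EuclideanSpace ℝ (Fin (n + 1))) :=
  {x | x ∈ frontier B ∧ pv v x ∈ interior (pv v '' B) ∧
    ∀ y ∈ B, pv v y = pv v x → ⟪x, v⟫ ≤ ⟪y, v⟫}

def Dplus {n : ℕ} (B : Set (EuclideanSpace ℝ (Fin (n + 1)))) (v : EuclideanSpace ℝ (Fin (n + 1))) :
    Set (EuclideanSpace ℝ (Fin (n + 1))) := D0 B v ∪ Uplus B v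

def Dminus {n : ℕ} (B : Set (EuclideanSpace ℝ (Fin (n + 1)))) (v : EuclideanSpace ℝ (Fin (n + 1))) :
    Set (EuclideanSpace ℝ (Fin (n + 1))) := D0 B v ∪ Uminus B v

/-- The median of `S` in direction `v`: midpoints of fiber pairs. -/
def median {n : ℕ} (B : Set (EuclideanSpace ℝ (Fin (n + 1)))) (v : EuclideanSpace ℝ (Fin (n + 1))) :
    Set (EuclideanSpace ℝ (Fin (n + 1))) :=
  {z | ∃ xp ∈ Dplus B v, ∃ xm ∈ Dminus B v, pv v xp = pv v xm ∧ z = midpoint ℝ xp xm}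

theorem stmt2 (n : ℕ) (B : Set (EuclideanSpace ℝ (Fin (n + 1))))
    (hBc : IsCompact B) (hBsc : StrictlyConvexSet B) (hBint : (interior B).Nonempty)
    (v : EuclideanSpace ℝ (Fin (n + 1))) (hv : ‖v‖ = 1)
    (y : ↥((ℝ ∙ v)ᗮ)) (hy : y ∈ frontier (pv v '' B)) :
    (∃! x : EuclideanSpace ℝ (Fin (n + 1)), x ∈ B ∧ pv v x = y) ∧
      ∀ x ∈ B, pv v x = y → x ∈ frontier B := by
  have hsurj : Function.Surjective (pv v) := fun u =>
    ⟨u, Submodule.orthogonalProjectionOnto_mem_subspace_eq_self u⟩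
  have hopen : IsOpenMap (pv v) := (pv v).isOpenMap hsurj
  -- no interior point of B projects to y
  have hnotint : ∀ x, x ∈ interior B → pv v x ≠ y := by
    intro x hx hxy
    have hyint : y ∈ interior (pv v '' B) :=
      interior_maximal (image_mono interior_subset)
        (hopen _ isOpen_interior) ⟨x, hx, hxy⟩
    exact hy.2 hyint
  -- existence
  have himg : IsClosed (pv v '' B) := (hBc.image (pv v).continuous).isClosed
  have hyim : y ∈ pv v '' B := by
    have := hy.1
    rwa [himg.closure_eq] at this
  obtain ⟨x₀, hx₀B, hx₀⟩ := hyim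
  refine ⟨⟨x₀, ⟨hx₀B, hx₀⟩, ?_⟩, ?_⟩
  · rintro x₁ ⟨hx₁B, hx₁⟩
    by_contra hne
    have hmid : midpoint ℝ x₁ x₀ ∈ interior B := by
      apply hBsc x₁ hx₁B x₀ hx₀B hne
      exact ⟨1/2, 1/2, by norm_num, by norm_num, by norm_num,
        by rw [midpoint_eq_smul_add, smul_add]; norm_num⟩
    exact hnotint _ hmid (by simp [midpoint_eq_smul_add, map_add, map_smul, hx₁, hx₀, ← smul_add]; module)
  · intro x hxB hxy
    rw [frontier, hBc.isClosed.closure_eq]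
    exact ⟨hxB, fun hint => hnotint x hint hxy⟩
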